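/- Let A be an n×n real symmetric matrix with eigenvalues λ_1 ≥ ⋯ ≥ λ_n, let 1 ≤ k < n with δ_k := λ_k − λ_{k+1} > 0, assume λ_k + λ_{k+1} ≥ 0, set a_0 := λ_k − δ_k/2, and let T ≥ δ_k. Then ∫_{−T}^{T} √(a_0² + t²) / min_{1≤i≤n} ((a_0 − λ_i)² + t²) dt ≤ 2π a_0/δ_k + 4 log(3T/δ_k). -/

import Mathlib

open Real

/-- Integral over the left vertical segment: with `a₀ = λ_k − δ_k/2`
the midpoint of `λ_k, λ_{k+1}` (so `a₀ ≥ 0` since `λ_k + λ_{k+1} ≥ 0`) and `T ≥ δ_k`,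
`∫_{−T}^{T} √(a₀²+t²) / min_i ((a₀−λᵢ)²+t²) dt ≤ 2π a₀/δ_k + 4 log(3T/δ_k)`.
Here `lam ⟨i-1, _⟩` is the (1-based) eigenvalue `λ_i` of the symmetric matrix. -/
theorem stmt8 (n k : ℕ) (hk : 1 ≤ k) (hkn : k < n)
    (lam : Fin n → ℝ)
    (hlam : ∀ i j : Fin n, i ≤ j → lam j ≤ lam i)
    (δk : ℝ) (hδdef : δk = lam ⟨k - 1, by omega⟩ - lam ⟨k, hkn⟩)
    (hδpos : 0 < δk)
    (hsum : 0 ≤ lam ⟨k - 1, by omega⟩ + lam ⟨k, hkn⟩)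
    (a₀ : ℝ) (ha₀ : a₀ = lam ⟨k - 1, by omega⟩ - δk / 2)
    (T : ℝ) (hT : δk ≤ T) :
    (∫ t in (-T)..T,
        Real.sqrt (a₀ ^ 2 + t ^ 2) /
          Finset.univ.inf' ⟨⟨0, by omega⟩, Finset.mem_univ _⟩
            (fun i : Fin n => (a₀ - lam i) ^ 2 + t ^ 2)) ≤
      2 * π * a₀ / δk + 4 * Real.log (3 * T / δk) := by
  have hne : (Finset.univ : Finset (Fin n)).Nonempty := ⟨⟨0, by omega⟩, Finset.mem_univ _⟩
  set c : ℝ := δk / 2 with hc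
  have hcpos : 0 < c := by positivity
  have ha₀nn : 0 ≤ a₀ := by
    rw [ha₀, hc]; linarith
  have hTpos : 0 < T := lt_of_lt_of_le hδpos hT
  -- gap bound
  have hgap : ∀ i : Fin n, c ≤ |a₀ - lam i| := by
    intro i
    rcases le_or_gt k i.val with h | h
    · -- lam i ≤ lam ⟨k⟩, so a₀ - lam i ≥ c
      have : lam i ≤ lam ⟨k, hkn⟩ := hlam ⟨k, hkn⟩ i (by simpa [Fin.le_def] using h)
      have h1 : c ≤ a₀ - lam i := by
        rw [ha₀, hc]; linarith
      calc c ≤ a₀ - lam i := h1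
        _ ≤ |a₀ - lam i| := le_abs_self _
    · have hik : i.val ≤ k - 1 := by omega
      have : lam ⟨k - 1, by omega⟩ ≤ lam i := hlam i ⟨k - 1, by omega⟩ (by simpa [Fin.le_def] using hik)
      have h1 : c ≤ -(a₀ - lam i) := by
        rw [ha₀, hc]; linarith
      calc c ≤ -(a₀ - lam i) := h1
        _ ≤ |a₀ - lam i| := neg_le_abs _
  have hmin : ∀ t : ℝ, c ^ 2 + t ^ 2 ≤
      Finset.univ.inf' hne (fun i : Fin n => (a₀ - lam i) ^ 2 + t ^ 2) := by
    intro t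
    apply Finset.le_inf'
    intro i _
    have := hgap i
    have h2 : c ^ 2 ≤ (a₀ - lam i) ^ 2 := by
      have := sq_le_sq' (by linarith [abs_nonneg (a₀ - lam i), neg_abs_le (a₀ - lam i)] : -(|a₀ - lam i|) ≤ c) (by linarith [le_abs_self c, abs_of_nonneg hcpos.le] : c ≤ |a₀ - lam i|)
      simpa [sq_abs] using this
    linarith
  have hminpos : ∀ t : ℝ, 0 < Finset.univ.inf' hne (fun i : Fin n => (a₀ - lam i) ^ 2 + t ^ 2) := by
    intro t; exact lt_of_lt_of_le (by positivity) (hmin t)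
  -- continuity and integrability of f
  have hfcont : Continuous (fun t : ℝ => Real.sqrt (a₀ ^ 2 + t ^ 2) /
      Finset.univ.inf' hne (fun i : Fin n => (a₀ - lam i) ^ 2 + t ^ 2)) := by
    apply Continuous.div
    · exact (continuous_const.add (continuous_pow 2)).sqrt
    · exact Continuous.finset_inf'_apply hne (fun i _ => by fun_prop)
    · exact fun t => (hminpos t).ne'
  set f : ℝ → ℝ := fun t => Real.sqrt (a₀ ^ 2 + t ^ 2) /
      Finset.univ.inf' hne (fun i : Fin n => (a₀ - lam i) ^ 2 + t ^ 2) with hf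
  -- even
  have heven : ∀ t, f (-t) = f t := by
    intro t
    have h2 : ∀ s : ℝ, (-s) ^ 2 = s ^ 2 := fun s => by ring
    simp only [hf, h2]
  have hsplit : (∫ t in (-T)..T, f t) = 2 * ∫ t in (0:ℝ)..T, f t := by
    have h1 : (∫ t in (-T)..(0:ℝ), f t) = ∫ t in (0:ℝ)..T, f t := by
      have h := intervalIntegral.integral_comp_neg f (a := 0) (b := T)
      simp only [neg_zero] at h
      rw [← h]
      exact intervalIntegral.integral_congr (fun x _ => heven x)
    rw [← intervalIntegral.integral_add_adjacent_intervals
      (hfcont.intervalIntegrable (-T) 0) (hfcont.intervalIntegrable 0 T), h1]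
    ring
  rw [hsplit]
  -- the bounding function on [0,T]
  set g : ℝ → ℝ := fun t => a₀ / (c ^ 2 + t ^ 2) + t / (c ^ 2 + t ^ 2) with hg
  have hgcont : Continuous g := by
    apply Continuous.add <;> apply Continuous.div <;> first
      | fun_prop
      | exact fun t => by positivity
  have hfg : ∀ t ∈ Set.uIcc (0:ℝ) T, f t ≤ g t := by
    intro t ht
    rw [Set.uIcc_of_le hTpos.le] at ht
    have ht0 : 0 ≤ t := ht.1
    have hnum : Real.sqrt (a₀ ^ 2 + t ^ 2) ≤ a₀ + t := by
      rw [show a₀ + t = Real.sqrt ((a₀ + t) ^ 2) from (Real.sqrt_sq (by linarith)).symm]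
      apply Real.sqrt_le_sqrt; nlinarith
    have hd : (0:ℝ) < c ^ 2 + t ^ 2 := by positivity
    calc f t ≤ (a₀ + t) / (c ^ 2 + t ^ 2) := by
          apply div_le_div₀ (by linarith) hnum hd (hmin t)
      _ = g t := by rw [hg, add_div]
  -- FTC for g
  have hFTC : (∫ t in (0:ℝ)..T, g t)
      = (a₀ / c * arctan (T / c) + Real.log (c ^ 2 + T ^ 2) / 2)
        - (a₀ / c * arctan (0 / c) + Real.log (c ^ 2 + 0 ^ 2) / 2) := by
    apply intervalIntegral.integral_eq_sub_of_hasDerivAt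
    · intro t _
      have h1 : HasDerivAt (fun t : ℝ => a₀ / c * arctan (t / c))
          (a₀ / (c ^ 2 + t ^ 2)) t := by
        have := ((Real.hasDerivAt_arctan (t / c)).comp t
          ((hasDerivAt_id t).div_const c)).const_mul (a₀ / c)
        refine this.congr_deriv ?_
        field_simp
      have h2 : HasDerivAt (fun t : ℝ => Real.log (c ^ 2 + t ^ 2) / 2)
          (t / (c ^ 2 + t ^ 2)) t := by
        have hd : (0:ℝ) < c ^ 2 + t ^ 2 := by positivity
        have := ((Real.hasDerivAt_log hd.ne').comp t
          ((hasDerivAt_pow 2 t).const_add (c ^ 2))).div_const 2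
        refine this.congr_deriv ?_
        field_simp
        ring
      exact h1.add h2
    · exact hgcont.intervalIntegrable 0 T
  have hmono : (∫ t in (0:ℝ)..T, f t) ≤ ∫ t in (0:ℝ)..T, g t := by
    apply intervalIntegral.integral_mono_on hTpos.le
      (hfcont.intervalIntegrable 0 T) (hgcont.intervalIntegrable 0 T)
    intro t ht
    exact hfg t (by rw [Set.uIcc_of_le hTpos.le]; exact ht)
  -- final estimates
  have harctan : arctan (T / c) ≤ π / 2 := (Real.arctan_lt_pi_div_two _).le
  have hlog1 : Real.log (c ^ 2 + T ^ 2) - Real.log (c ^ 2) ≤ 2 * Real.log (3 * T / δk) := by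
    rw [← Real.log_div (by positivity) (by positivity)]
    have h1 : (c ^ 2 + T ^ 2) / c ^ 2 ≤ (3 * T / δk) ^ 2 := by
      rw [div_le_iff₀ (by positivity)]
      have : c = δk / 2 := hc
      rw [this]; field_simp
      nlinarith [sq_nonneg T, sq_nonneg δk, hδpos, hT, mul_le_mul_of_nonneg_left (mul_le_mul hT hT hδpos.le hTpos.le) (sq_nonneg δk)]
    calc Real.log ((c ^ 2 + T ^ 2) / c ^ 2) ≤ Real.log ((3 * T / δk) ^ 2) :=
          Real.log_le_log (by positivity) h1
      _ = 2 * Real.log (3 * T / δk) := by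
          rw [Real.log_pow]; push_cast; ring
  have hlog2 : 0 ≤ Real.log (3 * T / δk) := by
    apply Real.log_nonneg
    rw [le_div_iff₀ hδpos]
    linarith
  calc 2 * ∫ t in (0:ℝ)..T, f t ≤ 2 * ((a₀ / c * arctan (T / c) + Real.log (c ^ 2 + T ^ 2) / 2)
        - (a₀ / c * arctan (0 / c) + Real.log (c ^ 2 + 0 ^ 2) / 2)) := by
        rw [← hFTC]; linarith
    _ ≤ 2 * π * a₀ / δk + 4 * Real.log (3 * T / δk) := by
        simp only [zero_div, Real.arctan_zero, mul_zero, zero_add]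
        have h1 : a₀ / c * arctan (T / c) ≤ a₀ / c * (π / 2) :=
          mul_le_mul_of_nonneg_left harctan (by positivity)
        have h2 : 2 * (a₀ / c * (π / 2)) = 2 * π * a₀ / δk := by
          rw [hc]; field_simp
        have h3 : Real.log (c ^ 2 + 0 ^ 2) = Real.log (c ^ 2) := by norm_num
        rw [h3]
        linarith [h1, h2, hlog1, hlog2]
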